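/- arXiv:2307.03447 — 7 statements merged into one kernel-verified Lean document; each statement's English description precedes it below -/
import Mathlib

section
/- Let E be a real vector space and f : E → EReal with f x ≠ ⊥ for all x ∈ E and f 0 ≠ ⊤. Then f is star-shaped (with respect to its value at 0) if and only if for every x ∈ E and every real λ ≥ 1 one has f (λ • x) ≥ (λ : EReal) * f x + ((1 - λ : ℝ) : EReal) * f 0. -/
/-- star-shapedness is equivalent to the reverse inequality for scalars `λ ≥ 1`. -/
theorem stmt_1 {E : Type*} [AddCommGroup E] [Module ℝ E]
    (f : E → EReal) (hbot : ∀ x : E, f x ≠ ⊥) (htop : f 0 ≠ ⊤) :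
    (∀ x : E, ∀ lam : ℝ, 0 ≤ lam → lam ≤ 1 →
        f (lam • x) ≤ (lam : EReal) * f x + ((1 - lam : ℝ) : EReal) * f 0) ↔
      (∀ x : E, ∀ lam : ℝ, 1 ≤ lam →
        (lam : EReal) * f x + ((1 - lam : ℝ) : EReal) * f 0 ≤ f (lam • x)) := by
  obtain ⟨c, hc⟩ : ∃ c : ℝ, f 0 = c := ⟨(f 0).toReal, (EReal.coe_toReal htop (hbot 0)).symm⟩
  constructor
  · intro H x lam hlam
    have hlam0 : 0 < lam := lt_of_lt_of_le zero_lt_one hlam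
    have key := H (lam • x) lam⁻¹ (by positivity) (inv_le_one_of_one_le₀ hlam)
    rw [smul_smul, inv_mul_cancel₀ hlam0.ne', one_smul] at key
    rcases eq_or_ne (f (lam • x)) ⊤ with hT | hT
    · rw [hT]; exact le_top
    obtain ⟨b, hb⟩ : ∃ b : ℝ, f (lam • x) = b := ⟨_, (EReal.coe_toReal hT (hbot _)).symm⟩
    rcases eq_or_ne (f x) ⊤ with hx | hx
    · exfalso
      rw [hx, hb, hc] at key
      norm_cast at key
    obtain ⟨a, ha⟩ : ∃ a : ℝ, f x = a := ⟨_, (EReal.coe_toReal hx (hbot _)).symm⟩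
    rw [ha, hb, hc] at key ⊢
    norm_cast at key ⊢
    have h1 : lam * a ≤ lam * (lam⁻¹ * b + (1 - lam⁻¹) * c) :=
      mul_le_mul_of_nonneg_left key hlam0.le
    have h3 : lam * (lam⁻¹ * b + (1 - lam⁻¹) * c) = b + (lam - 1) * c := by
      field_simp
    linarith
  · intro H x lam hlam0 hlam1
    rcases eq_or_lt_of_le hlam0 with h0 | h0
    · simp [← h0]
    have key := H (lam • x) lam⁻¹ ((one_le_inv₀ h0).mpr hlam1)
    rw [smul_smul, inv_mul_cancel₀ h0.ne', one_smul] at key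
    rcases eq_or_ne (f x) ⊤ with hx | hx
    · rw [hx, hc]
      rw [← EReal.coe_mul, EReal.mul_top_of_pos (by exact_mod_cast h0),
        EReal.top_add_coe]
      exact le_top
    obtain ⟨a, ha⟩ : ∃ a : ℝ, f x = a := ⟨_, (EReal.coe_toReal hx (hbot _)).symm⟩
    rcases eq_or_ne (f (lam • x)) ⊤ with hT | hT
    · exfalso
      rw [hT, ha, hc] at key
      have hinv : (0 : ℝ) < lam⁻¹ := by positivity
      rw [← EReal.coe_mul, EReal.mul_top_of_pos (by exact_mod_cast hinv),
        EReal.top_add_coe] at key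
      exact (EReal.coe_lt_top a).not_ge key
    obtain ⟨b, hb⟩ : ∃ b : ℝ, f (lam • x) = b := ⟨_, (EReal.coe_toReal hT (hbot _)).symm⟩
    rw [ha, hb, hc] at key ⊢
    norm_cast at key ⊢
    have h1 : lam * (lam⁻¹ * b + (1 - lam⁻¹) * c) ≤ lam * a :=
      mul_le_mul_of_nonneg_left key h0.le
    have h3 : lam * (lam⁻¹ * b + (1 - lam⁻¹) * c) = b + (lam - 1) * c := by
      field_simp
    linarith
end

section
/- Let E be a Hausdorff topological real vector space (a topological additive group with continuous scalar multiplication by ℝ). Let f : E → EReal satisfy f x ≠ ⊥ for all x ∈ E and f 0 ≠ ⊤, and let Z ∈ E with f Z ≠ ⊤. Then the functional f_Z : E → EReal satisfies: (a) f_Z is proper, i.e. f_Z x ≠ ⊥ for all x and f_Z is not identically ⊤; (b) f_Z is convex; (c) f_Z is lower semicontinuous on E. -/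
/-- The functional `f_Z` associated to `f : E → EReal` and `Z : E`:
`f_Z X = sInf { α * f Z + (1-α) * f 0 | α ∈ [0,1], X = α • Z }` (in `EReal`). -/
noncomputable def sliceFun {E : Type*} [AddCommGroup E] [Module ℝ E]
    (f : E → EReal) (Z : E) (X : E) : EReal :=
  sInf {v : EReal | ∃ α : ℝ, 0 ≤ α ∧ α ≤ 1 ∧ X = α • Z ∧
    v = (α : EReal) * f Z + ((1 - α : ℝ) : EReal) * f 0}

/-- `f_Z` is proper, convex and lower semicontinuous. -/
theorem stmt_2 {E : Type*} [AddCommGroup E] [Module ℝ E] [TopologicalSpace E]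
    [IsTopologicalAddGroup E] [ContinuousSMul ℝ E] [T2Space E]
    (f : E → EReal) (hbot : ∀ x : E, f x ≠ ⊥) (htop : f 0 ≠ ⊤)
    (Z : E) (hZ : f Z ≠ ⊤) :
    ((∀ x : E, sliceFun f Z x ≠ ⊥) ∧ ¬ (∀ x : E, sliceFun f Z x = ⊤)) ∧
      (∀ X Y : E, ∀ lam : ℝ, 0 ≤ lam → lam ≤ 1 →
        sliceFun f Z (lam • X + (1 - lam) • Y) ≤
          (lam : EReal) * sliceFun f Z X + ((1 - lam : ℝ) : EReal) * sliceFun f Z Y) ∧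
      LowerSemicontinuous (sliceFun f Z) := by
  set a : ℝ := (f Z).toReal with ha
  set b : ℝ := (f 0).toReal with hb
  have hfZ : f Z = (a : EReal) := (EReal.coe_toReal hZ (hbot Z)).symm
  have hf0 : f 0 = (b : EReal) := (EReal.coe_toReal htop (hbot 0)).symm
  -- the affine value function
  set c : ℝ → ℝ := fun α => α * a + (1 - α) * b with hc
  have key : ∀ (α : ℝ) (X : E), 0 ≤ α → α ≤ 1 → X = α • Z →
      sliceFun f Z X = ((c α : ℝ) : EReal) := by
    intro α X hα0 hα1 hXα
    have hset : {v : EReal | ∃ β : ℝ, 0 ≤ β ∧ β ≤ 1 ∧ X = β • Z ∧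
        v = (β : EReal) * f Z + ((1 - β : ℝ) : EReal) * f 0}
        = {((c α : ℝ) : EReal)} := by
      ext v
      simp only [Set.mem_setOf_eq, Set.mem_singleton_iff]
      constructor
      · rintro ⟨β, hβ0, hβ1, hXβ, rfl⟩
        rw [hfZ, hf0]
        have hβα : c β = c α := by
          rcases eq_or_ne Z 0 with hZ0 | hZ0
          · have hab : a = b := by rw [ha, hb, hZ0]
            simp only [hc, hab]; ring
          · have hαβ : α = β := by
              have h0 : (α - β) • Z = 0 := by
                rw [sub_smul, ← hXα, hXβ, sub_self]
              rcases smul_eq_zero.mp h0 with h | h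
              · linarith [sub_eq_zero.mp h]
              · exact absurd h hZ0
            rw [hαβ]
        rw [← hβα]
        simp only [hc]
        push_cast
        ring_nf
      · rintro rfl
        refine ⟨α, hα0, hα1, hXα, ?_⟩
        rw [hfZ, hf0]
        simp only [hc]
        push_cast
        ring_nf
    rw [sliceFun, hset, sInf_singleton]
  have keyTop : ∀ X : E, (¬ ∃ α : ℝ, 0 ≤ α ∧ α ≤ 1 ∧ X = α • Z) →
      sliceFun f Z X = ⊤ := by
    intro X hX
    have : {v : EReal | ∃ α : ℝ, 0 ≤ α ∧ α ≤ 1 ∧ X = α • Z ∧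
        v = (α : EReal) * f Z + ((1 - α : ℝ) : EReal) * f 0} = ∅ := by
      ext v
      simp only [Set.mem_setOf_eq, Set.mem_empty_iff_false, iff_false]
      rintro ⟨α, h0, h1, hX', _⟩
      exact hX ⟨α, h0, h1, hX'⟩
    rw [sliceFun, this, sInf_empty]
  -- classification
  have classify : ∀ X : E, sliceFun f Z X = ⊤ ∨
      ∃ α : ℝ, 0 ≤ α ∧ α ≤ 1 ∧ X = α • Z ∧ sliceFun f Z X = ((c α : ℝ) : EReal) := by
    intro X
    by_cases hX : ∃ α : ℝ, 0 ≤ α ∧ α ≤ 1 ∧ X = α • Z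
    · obtain ⟨α, h0, h1, hXα⟩ := hX
      exact Or.inr ⟨α, h0, h1, hXα, key α X h0 h1 hXα⟩
    · exact Or.inl (keyTop X hX)
  have hne_bot : ∀ x : E, sliceFun f Z x ≠ ⊥ := by
    intro x
    rcases classify x with h | ⟨α, _, _, _, h⟩ <;> rw [h]
    · exact top_ne_bot
    · exact EReal.coe_ne_bot _
  refine ⟨⟨hne_bot, ?_⟩, ?_, ?_⟩
  · -- not identically ⊤
    intro hall
    have := hall Z
    rw [key 1 Z zero_le_one le_rfl (one_smul ℝ Z).symm] at this
    exact EReal.coe_ne_top _ this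
  · -- convexity
    intro X Y lam hl0 hl1
    rcases eq_or_lt_of_le hl0 with h0 | h0
    · -- lam = 0
      subst h0
      simp
    rcases eq_or_lt_of_le hl1 with h1 | h1
    · -- lam = 1
      subst h1
      simp
    -- 0 < lam < 1
    rcases classify X with hX | ⟨α, hα0, hα1, hXα, hX⟩
    · -- RHS = ⊤
      rw [hX]
      have hmul : (lam : EReal) * ⊤ = ⊤ :=
        EReal.mul_top_of_pos (by exact_mod_cast h0)
      rw [hmul, EReal.top_add_of_ne_bot]
      · exact le_top
      · -- (1-lam) * sliceFun f Z Y ≠ ⊥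
        rcases classify Y with hY | ⟨β, _, _, _, hY⟩ <;> rw [hY]
        · rw [EReal.mul_top_of_pos (by exact_mod_cast (by linarith : (0:ℝ) < 1 - lam))]
          exact top_ne_bot
        · rw [← EReal.coe_mul]; exact EReal.coe_ne_bot _
    rcases classify Y with hY | ⟨β, hβ0, hβ1, hYβ, hY⟩
    · rw [hY]
      rw [EReal.mul_top_of_pos (by exact_mod_cast (by linarith : (0:ℝ) < 1 - lam)),
        EReal.add_top_of_ne_bot]
      · exact le_top
      · rw [hX, ← EReal.coe_mul]; exact EReal.coe_ne_bot _
    · -- both in segment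
      have hmem : lam • X + (1 - lam) • Y = (lam * α + (1 - lam) * β) • Z := by
        rw [hXα, hYβ, smul_smul, smul_smul, ← add_smul]
      have hγ0 : 0 ≤ lam * α + (1 - lam) * β :=
        add_nonneg (mul_nonneg hl0 hα0) (mul_nonneg (by linarith) hβ0)
      have hγ1 : lam * α + (1 - lam) * β ≤ 1 := by nlinarith
      rw [key _ _ hγ0 hγ1 hmem, hX, hY, ← EReal.coe_mul, ← EReal.coe_mul,
        ← EReal.coe_add, EReal.coe_le_coe_iff]
      refine le_of_eq ?_
      simp only [hc]
      ring
  · -- lower semicontinuity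
    intro x y hy
    by_cases hx : ∃ α : ℝ, 0 ≤ α ∧ α ≤ 1 ∧ x = α • Z
    · obtain ⟨α₀, h0, h1, hxα⟩ := hx
      set T : Set ℝ := Set.Icc 0 1 ∩ {β | ((c β : ℝ) : EReal) ≤ y} with hT
      have hTcp : IsCompact T := isCompact_Icc.inter_right
        (isClosed_le (continuous_coe_real_ereal.comp (by fun_prop)) continuous_const)
      have hKcp : IsCompact ((fun β : ℝ => β • Z) '' T) :=
        hTcp.image (continuous_id.smul continuous_const)
      have hxK : x ∉ (fun β : ℝ => β • Z) '' T := by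
        rintro ⟨β, ⟨⟨hβ0, hβ1⟩, hβy⟩, hβx⟩
        have := key β x hβ0 hβ1 hβx.symm
        exact absurd (hy.trans_le (this ▸ hβy)) (lt_irrefl y)
      have hmem : ((fun β : ℝ => β • Z) '' T)ᶜ ∈ nhds x :=
        hKcp.isClosed.isOpen_compl.mem_nhds hxK
      refine Filter.eventually_of_mem hmem ?_
      intro z hz
      rcases classify z with h | ⟨β, hβ0, hβ1, hzβ, h⟩ <;> rw [h]
      · exact lt_of_lt_of_le hy le_top
      · by_contra hcon
        push_neg at hcon
        exact hz ⟨β, ⟨⟨hβ0, hβ1⟩, hcon⟩, hzβ.symm⟩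
    · rw [keyTop x hx] at hy
      set T : Set ℝ := Set.Icc 0 1 with hT
      have hKcp : IsCompact ((fun β : ℝ => β • Z) '' T) :=
        isCompact_Icc.image (continuous_id.smul continuous_const)
      have hxK : x ∉ (fun β : ℝ => β • Z) '' T := by
        rintro ⟨β, ⟨hβ0, hβ1⟩, hβx⟩
        exact hx ⟨β, hβ0, hβ1, hβx.symm⟩
      have hmem : ((fun β : ℝ => β • Z) '' T)ᶜ ∈ nhds x :=
        hKcp.isClosed.isOpen_compl.mem_nhds hxK
      refine Filter.eventually_of_mem hmem ?_
      intro z hz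
      rcases classify z with h | ⟨β, hβ0, hβ1, hzβ, h⟩ <;> rw [h]
      · exact hy
      · exact absurd ⟨β, ⟨hβ0, hβ1⟩, hzβ.symm⟩ hz
end

section
/- Let E be a real vector space and let f : E → EReal be star-shaped (with respect to its value at 0), with f x ≠ ⊥ for all x ∈ E and f 0 ≠ ⊤. Then: (a) for every X ∈ E and every Z ∈ E with f Z ≠ ⊤, f X ≤ f_Z X; (b) for every X ∈ E with f X ≠ ⊤, f_X X = f X; consequently (c) for every X ∈ E, f X = ⨅_{Z : f Z ≠ ⊤} f_Z X, and this infimum is attained (there is a Z with f Z ≠ ⊤ and f X = f_Z X). -/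
/-- a star-shaped functional is the attained pointwise minimum of
the family `f_Z`, `Z ∈ dom f`. -/
theorem stmt_3 {E : Type*} [AddCommGroup E] [Module ℝ E]
    (f : E → EReal) (hbot : ∀ x : E, f x ≠ ⊥) (htop : f 0 ≠ ⊤)
    (hss : ∀ x : E, ∀ lam : ℝ, 0 ≤ lam → lam ≤ 1 →
      f (lam • x) ≤ (lam : EReal) * f x + ((1 - lam : ℝ) : EReal) * f 0) :
    (∀ X Z : E, f Z ≠ ⊤ → f X ≤ sliceFun f Z X) ∧
      (∀ X : E, f X ≠ ⊤ → sliceFun f X X = f X) ∧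
      (∀ X : E,
        f X = (⨅ Z : {Z : E // f Z ≠ ⊤}, sliceFun f Z.1 X) ∧
          ∃ Z : E, f Z ≠ ⊤ ∧ f X = sliceFun f Z X) := by
  have ha : ∀ X Z : E, f X ≤ sliceFun f Z X := by
    intro X Z
    apply le_sInf
    rintro v ⟨α, h0, h1, rfl, rfl⟩
    exact hss Z α h0 h1
  have hb : ∀ X : E, sliceFun f X X = f X := by
    intro X
    refine le_antisymm (sInf_le ?_) (ha X X)
    refine ⟨1, zero_le_one, le_refl 1, (one_smul ℝ X).symm, ?_⟩
    norm_num
  have hex : ∀ X : E, ∃ Z : E, f Z ≠ ⊤ ∧ f X = sliceFun f Z X := by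
    intro X
    by_cases hX : f X = ⊤
    · refine ⟨0, htop, ?_⟩
      rw [hX]
      refine le_antisymm (le_sInf ?_) le_top
      rintro v ⟨α, h0, h1, hXs, rfl⟩
      rw [smul_zero] at hXs
      exact absurd (hXs ▸ hX) htop
    · exact ⟨X, hX, (hb X).symm⟩
  refine ⟨fun X Z _ => ha X Z, fun X _ => hb X, fun X => ?_⟩
  obtain ⟨Z, hZ, hZeq⟩ := hex X
  refine ⟨le_antisymm (le_iInf fun W => ha X W.1) ?_, Z, hZ, hZeq⟩
  exact iInf_le_of_le ⟨Z, hZ⟩ hZeq.ge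
end

section
/- Let E be an ordered real vector space: a partially ordered additive commutative group with an ℝ-module structure such that x ≤ y implies x + z ≤ y + z, and such that 0 ≤ λ and x ≤ y imply λ • x ≤ λ • y. Let f : E → EReal be monotone (X ≤ Y implies f X ≤ f Y), star-shaped (with respect to its value at 0), with f x ≠ ⊥ for all x ∈ E and f 0 ≠ ⊤. Then there exists a family (g_Z) of functions g_Z : E → EReal, indexed by the Z ∈ E with f Z ≠ ⊤, such that: each g_Z is monotone, convex, satisfies g_Z x ≠ ⊥ for all x, g_Z 0 = f 0, and f X ≤ g_Z X for all X ∈ E; and for every X ∈ E, f X = ⨅_{Z : f Z ≠ ⊤} g_Z X, this infimum being attained. -/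
private lemma auxA {S : Set ℝ} (hne : S.Nonempty) (hbd : BddBelow S) {c d lam : ℝ}
    (hlam : 0 ≤ lam) (h : ∀ s ∈ S, c ≤ lam * s + d) : c ≤ lam * sInf S + d := by
  rcases eq_or_lt_of_le hlam with h0 | h0
  · obtain ⟨s, hs⟩ := hne
    have := h s hs
    rw [← h0] at this ⊢
    linarith
  · have key : (c - d) / lam ≤ sInf S :=
      le_csInf hne (fun s hs => by rw [div_le_iff₀ h0]; linarith [h s hs])
    rw [div_le_iff₀ h0] at key
    linarith

private lemma auxB {c : ℝ} (hc : 0 ≤ c) {x : EReal} (hx : x ≠ ⊥) : (c : EReal) * x ≠ ⊥ := by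
  induction x using EReal.rec with
  | bot => exact absurd rfl hx
  | coe r => rw [← EReal.coe_mul]; exact EReal.coe_ne_bot _
  | top =>
    rcases eq_or_lt_of_le hc with h0 | h0
    · rw [← h0, EReal.coe_zero, zero_mul]; exact EReal.zero_ne_bot
    · rw [EReal.coe_mul_top_of_pos h0]; simp

/-- a monotone star-shaped functional on an ordered real vector space is
the attained pointwise minimum of a family of monotone convex functionals indexed by
the points of its proper domain, all agreeing with it at `0` and dominating it. -/
theorem stmt_4 {E : Type*} [AddCommGroup E] [PartialOrder E] [IsOrderedAddMonoid E] [Module ℝ E] [PosSMulMono ℝ E]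
    (f : E → EReal) (hmono : Monotone f)
    (hss : ∀ x : E, ∀ lam : ℝ, 0 ≤ lam → lam ≤ 1 →
      f (lam • x) ≤ (lam : EReal) * f x + ((1 - lam : ℝ) : EReal) * f 0)
    (hbot : ∀ x : E, f x ≠ ⊥) (htop : f 0 ≠ ⊤) :
    ∃ g : {Z : E // f Z ≠ ⊤} → E → EReal,
      (∀ Z, Monotone (g Z)) ∧
      (∀ Z, ∀ X Y : E, ∀ lam : ℝ, 0 ≤ lam → lam ≤ 1 →
        g Z (lam • X + (1 - lam) • Y) ≤
          (lam : EReal) * g Z X + ((1 - lam : ℝ) : EReal) * g Z Y) ∧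
      (∀ Z, ∀ x : E, g Z x ≠ ⊥) ∧
      (∀ Z, g Z 0 = f 0) ∧
      (∀ Z, ∀ X : E, f X ≤ g Z X) ∧
      (∀ X : E, f X = ⨅ Z, g Z X) ∧
      (∀ X : E, ∃ Z, f X = g Z X) := by
  classical
  set b : ℝ := (f 0).toReal with hbdef
  have hb0 : ((b : ℝ) : EReal) = f 0 := EReal.coe_toReal htop (hbot 0)
  set S : {Z : E // f Z ≠ ⊤} → E → Set ℝ := fun Z X =>
    {v : ℝ | ∃ l : ℝ, 0 ≤ l ∧ l ≤ 1 ∧ X ≤ l • (Z : E) ∧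
      v = l * (f (Z : E)).toReal + (1 - l) * b} with hSdef
  have haZ : ∀ Z : {Z : E // f Z ≠ ⊤}, (((f (Z : E)).toReal : ℝ) : EReal) = f (Z : E) :=
    fun Z => EReal.coe_toReal Z.2 (hbot _)
  -- boundedness below
  have hSbdd : ∀ Z X, BddBelow (S Z X) := by
    intro Z X
    refine ⟨min (f (Z : E)).toReal b, ?_⟩
    rintro v ⟨l, hl0, hl1, -, rfl⟩
    nlinarith [min_le_left (f (Z : E)).toReal b, min_le_right (f (Z : E)).toReal b]
  -- every feasible value dominates f X
  have hdom : ∀ Z X, ∀ v ∈ S Z X, f X ≤ (v : EReal) := by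
    rintro Z X v ⟨l, hl0, hl1, hle, rfl⟩
    calc f X ≤ f (l • (Z : E)) := hmono hle
      _ ≤ (l : EReal) * f (Z : E) + ((1 - l : ℝ) : EReal) * f 0 := hss _ l hl0 hl1
      _ = ((l * (f (Z : E)).toReal + (1 - l) * b : ℝ) : EReal) := by
          rw [EReal.coe_add, EReal.coe_mul, EReal.coe_mul, haZ Z, hb0]
  set g : {Z : E // f Z ≠ ⊤} → E → EReal := fun Z X =>
    if h : (S Z X).Nonempty then ((sInf (S Z X) : ℝ) : EReal) else ⊤ with hgdef
  have hge : ∀ Z, ∀ X : E, f X ≤ g Z X := by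
    intro Z X
    by_cases h : (S Z X).Nonempty
    · rw [hgdef]; simp only [dif_pos h]
      obtain ⟨v0, hv0⟩ := h
      have hXtop : f X ≠ ⊤ := by
        intro hT
        have := hdom Z X v0 hv0
        rw [hT, top_le_iff] at this
        exact EReal.coe_ne_top _ this
      rw [← EReal.coe_toReal hXtop (hbot X), EReal.coe_le_coe_iff]
      refine le_csInf ⟨v0, hv0⟩ (fun v hv => ?_)
      have := hdom Z X v hv
      rw [← EReal.coe_toReal hXtop (hbot X), EReal.coe_le_coe_iff] at this
      exact this
    · rw [hgdef]; simp only [dif_neg h]; exact le_top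
  have hnebot : ∀ Z, ∀ x : E, g Z x ≠ ⊥ := by
    intro Z x
    rw [hgdef]
    by_cases h : (S Z x).Nonempty
    · simp only [dif_pos h]; exact EReal.coe_ne_bot _
    · simp only [dif_neg h]; simp
  -- monotone
  have hgmono : ∀ Z, Monotone (g Z) := by
    intro Z X Y hXY
    by_cases h : (S Z Y).Nonempty
    · have hsub : S Z Y ⊆ S Z X := by
        rintro v ⟨l, hl0, hl1, hle, rfl⟩
        exact ⟨l, hl0, hl1, le_trans hXY hle, rfl⟩
      have h' : (S Z X).Nonempty := h.mono hsub
      rw [hgdef]; simp only [dif_pos h, dif_pos h']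
      exact EReal.coe_le_coe_iff.mpr (csInf_le_csInf (hSbdd Z X) h hsub)
    · rw [hgdef]; simp only [dif_neg h]; exact le_top
  -- value at X itself
  have hself : ∀ X : E, ∀ hX : f X ≠ ⊤, g ⟨X, hX⟩ X ≤ f X := by
    intro X hX
    have hmem : (f X).toReal ∈ S ⟨X, hX⟩ X := by
      refine ⟨1, zero_le_one, le_refl 1, by rw [one_smul], by ring⟩
    have hne : (S ⟨X, hX⟩ X).Nonempty := ⟨_, hmem⟩
    rw [hgdef]; simp only [dif_pos hne]
    calc ((sInf (S ⟨X, hX⟩ X) : ℝ) : EReal) ≤ ((f X).toReal : EReal) :=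
          EReal.coe_le_coe_iff.mpr (csInf_le (hSbdd _ _) hmem)
      _ = f X := EReal.coe_toReal hX (hbot X)
  refine ⟨g, hgmono, ?_, hnebot, ?_, hge, ?_, ?_⟩
  · -- convexity
    intro Z X Y lam hl0 hl1
    by_cases hX : (S Z X).Nonempty
    · by_cases hY : (S Z Y).Nonempty
      · -- both nonempty
        obtain ⟨uX, mu, hmu0, hmu1, hmuX, humu⟩ := hX
        obtain ⟨uY, nu, hnu0, hnu1, hnuY, hunu⟩ := hY
        -- combined feasibility lemma
        have hcomb : ∀ u ∈ S Z X, ∀ v ∈ S Z Y,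
            lam * u + (1 - lam) * v ∈ S Z (lam • X + (1 - lam) • Y) := by
          rintro u ⟨p, hp0, hp1, hpX, rfl⟩ v ⟨q, hq0, hq1, hqY, rfl⟩
          refine ⟨lam * p + (1 - lam) * q, add_nonneg (mul_nonneg hl0 hp0) (mul_nonneg (by linarith) hq0), by nlinarith, ?_, by ring⟩
          have h1 : lam • X ≤ lam • (p • (Z : E)) :=
            smul_le_smul_of_nonneg_left hpX hl0
          have h2 : (1 - lam) • Y ≤ (1 - lam) • (q • (Z : E)) :=
            smul_le_smul_of_nonneg_left hqY (by linarith)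
          calc lam • X + (1 - lam) • Y ≤ lam • (p • (Z : E)) + (1 - lam) • (q • (Z : E)) :=
                add_le_add h1 h2
            _ = (lam * p + (1 - lam) * q) • (Z : E) := by
                rw [smul_smul, smul_smul, ← add_smul]
        have hLne : (S Z (lam • X + (1 - lam) • Y)).Nonempty :=
          ⟨_, hcomb _ ⟨mu, hmu0, hmu1, hmuX, humu⟩ _ ⟨nu, hnu0, hnu1, hnuY, hunu⟩⟩
        have hXne : (S Z X).Nonempty := ⟨uX, mu, hmu0, hmu1, hmuX, humu⟩
        have hYne : (S Z Y).Nonempty := ⟨uY, nu, hnu0, hnu1, hnuY, hunu⟩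
        rw [hgdef]; simp only [dif_pos hLne, dif_pos hXne, dif_pos hYne]
        rw [← EReal.coe_mul, ← EReal.coe_mul, ← EReal.coe_add, EReal.coe_le_coe_iff]
        -- real inequality via auxA applied twice
        refine auxA hXne (hSbdd Z X) hl0 (fun u hu => ?_)
        have inner : sInf (S Z (lam • X + (1 - lam) • Y)) ≤
            (1 - lam) * sInf (S Z Y) + lam * u := by
          refine auxA hYne (hSbdd Z Y) (by linarith) (fun v hv => ?_)
          have := csInf_le (hSbdd Z _) (hcomb u hu v hv)
          linarith
        linarith
      · -- S Z Y empty
        have hgY : g Z Y = ⊤ := by rw [hgdef]; simp only [dif_neg hY]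
        rcases eq_or_lt_of_le hl1 with h1 | h1
        · -- lam = 1
          rw [h1] at *
          have hpt : (1 : ℝ) • X + (1 - 1 : ℝ) • Y = X := by
            rw [sub_self, one_smul, zero_smul, add_zero]
          rw [hpt, sub_self, EReal.coe_zero, zero_mul, add_zero, EReal.coe_one, one_mul]
        · have : ((1 - lam : ℝ) : EReal) * g Z Y = ⊤ := by
            rw [hgY, EReal.coe_mul_top_of_pos (by linarith)]
          rw [this]
          rw [EReal.add_top_of_ne_bot (auxB hl0 (hnebot Z X))]
          exact le_top
    · -- S Z X empty
      have hgX : g Z X = ⊤ := by rw [hgdef]; simp only [dif_neg hX]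
      rcases eq_or_lt_of_le hl0 with h0 | h0
      · -- lam = 0
        rw [← h0]
        have hpt : (0 : ℝ) • X + (1 - 0 : ℝ) • Y = Y := by
          rw [sub_zero, zero_smul, one_smul, zero_add]
        rw [hpt, EReal.coe_zero, zero_mul, zero_add, sub_zero, EReal.coe_one, one_mul]
      · have : (lam : EReal) * g Z X = ⊤ := by
          rw [hgX, EReal.coe_mul_top_of_pos h0]
        rw [this, EReal.top_add_of_ne_bot (auxB (by linarith) (hnebot Z Y))]
        exact le_top
  · -- g Z 0 = f 0
    intro Z
    have hmem : b ∈ S Z 0 := by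
      refine ⟨0, le_refl 0, zero_le_one, by rw [zero_smul], by ring⟩
    have hne : (S Z 0).Nonempty := ⟨b, hmem⟩
    rw [hgdef]; simp only [dif_pos hne]
    have h1 : sInf (S Z 0) ≤ b := csInf_le (hSbdd Z 0) hmem
    have h2 : b ≤ sInf (S Z 0) := by
      refine le_csInf hne (fun v hv => ?_)
      have := hdom Z 0 v hv
      rw [← hb0, EReal.coe_le_coe_iff] at this
      exact this
    rw [le_antisymm h1 h2, hb0]
  · -- iInf
    intro X
    haveI : Nonempty {Z : E // f Z ≠ ⊤} := ⟨⟨0, htop⟩⟩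
    by_cases hX : f X = ⊤
    · have hall : ∀ Z, g Z X = ⊤ := fun Z => top_le_iff.mp (hX ▸ hge Z X)
      simp [hall, hX]
    · refine le_antisymm (le_iInf fun Z => hge Z X) ?_
      exact le_trans (iInf_le _ ⟨X, hX⟩) (hself X hX)
  · -- attained
    intro X
    by_cases hX : f X = ⊤
    · refine ⟨⟨0, htop⟩, ?_⟩
      have := top_le_iff.mp (hX ▸ hge ⟨0, htop⟩ X)
      rw [hX, this]
    · exact ⟨⟨X, hX⟩, le_antisymm (hge _ _) (hself X hX)⟩
end

section
/- Let E be a real vector space and let f : E → EReal satisfy f x ≠ ⊥ for all x, f 0 = 0, and positive homogeneity: f (α • X) = (α : EReal) * f X for every X ∈ E and every real α > 0. For Z ∈ E define f_Z⁺ : E → EReal by f_Z⁺ X := sInf { (α : EReal) * f Z | α ∈ [0,∞) and X = α • Z } (so f_Z⁺ X = ⊤ when no such α exists). Then for every Z with f Z ≠ ⊤: f_Z⁺ is positively homogeneous (f_Z⁺(α • X) = (α : EReal) * f_Z⁺ X for all real α > 0), subadditive (f_Z⁺(X + Y) ≤ f_Z⁺ X + f_Z⁺ Y for all X, Y), and f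 X ≤ f_Z⁺ X for all X; moreover, for every X ∈ E, f X = ⨅_{Z : f Z ≠ ⊤} f_Z⁺ X, this infimum being attained. -/
/-- The functional `f_Z⁺` associated to `f : E → EReal` and `Z : E`:
`f_Z⁺ X = sInf { α * f Z | α ∈ [0,∞), X = α • Z }` (in `EReal`, `sInf ∅ = ⊤`). -/
noncomputable def slicePH {E : Type*} [AddCommGroup E] [Module ℝ E]
    (f : E → EReal) (Z : E) (X : E) : EReal :=
  sInf {v : EReal | ∃ α : ℝ, 0 ≤ α ∧ X = α • Z ∧ v = (α : EReal) * f Z}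

lemma slicePH_of_rep {E : Type*} [AddCommGroup E] [Module ℝ E]
    (f : E → EReal) (h0 : f 0 = 0) {Z X : E} {α : ℝ} (hα : 0 ≤ α) (hX : X = α • Z) :
    slicePH f Z X = (α : EReal) * f Z := by
  refine le_antisymm (sInf_le ⟨α, hα, hX, rfl⟩) (le_sInf ?_)
  rintro v ⟨β, hβ, hXβ, rfl⟩
  by_cases hZ0 : Z = 0
  · subst hZ0; simp [h0]
  · have hαβ : α = β := by
      have h : (α - β) • Z = 0 := by rw [sub_smul, hX.symm.trans hXβ, sub_self]
      rcases smul_eq_zero.mp h with h' | h'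
      · linarith [sub_eq_zero.mp h']
      · exact absurd h' hZ0
    rw [hαβ]

lemma slicePH_of_not {E : Type*} [AddCommGroup E] [Module ℝ E]
    (f : E → EReal) {Z X : E} (h : ∀ α : ℝ, 0 ≤ α → X ≠ α • Z) :
    slicePH f Z X = ⊤ := by
  have hs : {v : EReal | ∃ α : ℝ, 0 ≤ α ∧ X = α • Z ∧ v = (α : EReal) * f Z} = ∅ := by
    ext v; simp only [Set.mem_setOf_eq, Set.mem_empty_iff_false, iff_false]
    rintro ⟨α, hα, hX, _⟩; exact h α hα hX
  rw [slicePH, hs, sInf_empty]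

lemma slicePH_ne_bot {E : Type*} [AddCommGroup E] [Module ℝ E]
    (f : E → EReal) (h0 : f 0 = 0) {Z : E} (hb : f Z ≠ ⊥) (ht : f Z ≠ ⊤) (X : E) :
    slicePH f Z X ≠ ⊥ := by
  by_cases hrep : ∃ α : ℝ, 0 ≤ α ∧ X = α • Z
  · obtain ⟨α, hα, hX⟩ := hrep
    rw [slicePH_of_rep f h0 hα hX]
    lift f Z to ℝ using ⟨ht, hb⟩ with r
    rw [← EReal.coe_mul]
    exact EReal.coe_ne_bot _
  · rw [slicePH_of_not f (fun α hα hX => hrep ⟨α, hα, hX⟩)]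
    simp


/-- a positively homogeneous functional with `f 0 = 0` is the attained pointwise
minimum of the sublinear (positively homogeneous and subadditive) functionals `f_Z⁺`,
`Z ∈ dom f`, each of which dominates `f`. -/
theorem stmt_5 {E : Type*} [AddCommGroup E] [Module ℝ E]
    (f : E → EReal) (hbot : ∀ x : E, f x ≠ ⊥) (h0 : f 0 = 0)
    (hph : ∀ X : E, ∀ α : ℝ, 0 < α → f (α • X) = (α : EReal) * f X) :
    (∀ Z : E, f Z ≠ ⊤ →
      (∀ X : E, ∀ α : ℝ, 0 < α → slicePH f Z (α • X) = (α : EReal) * slicePH f Z X) ∧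
      (∀ X Y : E, slicePH f Z (X + Y) ≤ slicePH f Z X + slicePH f Z Y) ∧
      (∀ X : E, f X ≤ slicePH f Z X)) ∧
    (∀ X : E,
      f X = (⨅ Z : {Z : E // f Z ≠ ⊤}, slicePH f Z.1 X) ∧
        ∃ Z : E, f Z ≠ ⊤ ∧ f X = slicePH f Z X) := by
  have dom : ∀ Z : E, f Z ≠ ⊤ → ∀ X : E, f X ≤ slicePH f Z X := by
    intro Z hZ X
    refine le_sInf ?_
    rintro v ⟨α, hα, hX, rfl⟩
    rcases hα.eq_or_lt with h | h
    · subst hX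
      rw [← h, zero_smul, h0]
      simp
    · rw [hX, hph Z α h]
  constructor
  · intro Z hZ
    refine ⟨?_, ?_, dom Z hZ⟩
    · -- positive homogeneity
      intro X c hc
      by_cases hrep : ∃ α : ℝ, 0 ≤ α ∧ X = α • Z
      · obtain ⟨α, hα, hX⟩ := hrep
        rw [slicePH_of_rep f h0 hα hX,
            slicePH_of_rep f h0 (mul_nonneg hc.le hα) (by rw [hX, smul_smul]),
            EReal.coe_mul, mul_assoc]
      · rw [slicePH_of_not f (fun α hα hX => hrep ⟨α, hα, hX⟩),
            slicePH_of_not f ?_, EReal.mul_top_of_pos (by exact_mod_cast hc)]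
        intro β hβ hX
        refine hrep ⟨β / c, div_nonneg hβ hc.le, ?_⟩
        have : (c⁻¹ : ℝ) • (c • X) = c⁻¹ • (β • Z) := by rw [hX]
        rw [smul_smul, smul_smul, inv_mul_cancel₀ hc.ne', one_smul] at this
        rw [this, div_eq_inv_mul]
    · -- subadditivity
      intro X Y
      by_cases hX : ∃ α : ℝ, 0 ≤ α ∧ X = α • Z
      · by_cases hY : ∃ α : ℝ, 0 ≤ α ∧ Y = α • Z
        · obtain ⟨α, hα, hXr⟩ := hX
          obtain ⟨β, hβ, hYr⟩ := hY
          rw [slicePH_of_rep f h0 hα hXr, slicePH_of_rep f h0 hβ hYr,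
              slicePH_of_rep f h0 (add_nonneg hα hβ) (by rw [hXr, hYr, add_smul])]
          lift f Z to ℝ using ⟨hZ, hbot Z⟩ with r
          rw [← EReal.coe_mul, ← EReal.coe_mul, ← EReal.coe_mul, ← EReal.coe_add]
          exact_mod_cast le_of_eq (add_mul α β r)
        · rw [slicePH_of_not f (fun α hα h => hY ⟨α, hα, h⟩),
              EReal.add_top_of_ne_bot (slicePH_ne_bot f h0 (hbot Z) hZ X)]
          exact le_top
      · rw [slicePH_of_not f (fun α hα h => hX ⟨α, hα, h⟩),
            EReal.top_add_of_ne_bot (slicePH_ne_bot f h0 (hbot Z) hZ Y)]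
        exact le_top
  · intro X
    have hex : ∃ Z : E, f Z ≠ ⊤ ∧ f X = slicePH f Z X := by
      by_cases hX : f X = ⊤
      · refine ⟨0, by simp [h0], ?_⟩
        rw [hX, slicePH_of_not f ?_]
        intro α hα h
        rw [smul_zero] at h
        rw [h, h0] at hX
        exact (by simp : (0 : EReal) ≠ ⊤) hX
      · exact ⟨X, hX, by rw [slicePH_of_rep f h0 zero_le_one (one_smul ℝ X).symm]; norm_num⟩
    obtain ⟨Z₀, hZ₀, hval⟩ := hex
    refine ⟨le_antisymm (le_iInf fun Z => dom Z.1 Z.2 X) ?_, Z₀, hZ₀, hval⟩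
    exact iInf_le_of_le ⟨Z₀, hZ₀⟩ hval.ge
end

section
/- Let (Ω, F, μ) be a probability space, m a sub-σ-algebra of F, and E := MeasureTheory.Lp ℝ ∞ μ the space of (a.e.-classes of) essentially bounded real random variables, with its a.e. order and its pointwise-a.e. ring structure. Let ρ : E → E be monotone (X ≤ Y a.e. implies ρ X ≤ ρ Y a.e.) and cash-subadditive: for every X ∈ E and every c ∈ E with c ≥ 0 having an m-strongly-measurable representative, ρ (X + c) ≤ ρ X + c. Then ρ is regular: for every m-measurable set A and every X ∈ E, 1_A * ρ X = 1_A * ρ (1_A * X) in E, where 1_A ∈ E denotes the class of the indicator function of A. -/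
open MeasureTheory

/-- Pointwise-a.e. multiplication on `L∞` (well defined since essentially bounded functions
are closed under products). -/
noncomputable def LinfMul {Ω : Type*} [MeasurableSpace Ω] {μ : Measure Ω}
    (f g : Lp ℝ ⊤ μ) : Lp ℝ ⊤ μ :=
  ((Lp.memLp g).smul (r := ⊤) (Lp.memLp f)).toLp ((f : Ω → ℝ) • (g : Ω → ℝ))

theorem LinfMul_coeFn {Ω : Type*} [MeasurableSpace Ω] {μ : Measure Ω}
    (f g : Lp ℝ ⊤ μ) : (LinfMul f g : Ω → ℝ) =ᵐ[μ] fun ω => (f : Ω → ℝ) ω * (g : Ω → ℝ) ω :=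
  MemLp.coeFn_toLp _

theorem ae_abs_le_norm {Ω : Type*} [MeasurableSpace Ω] {μ : Measure Ω}
    (f : Lp ℝ ⊤ μ) : ∀ᵐ ω ∂μ, |(f : Ω → ℝ) ω| ≤ ‖f‖ := by
  have h := MeasureTheory.ae_le_eLpNormEssSup (f := (f : Ω → ℝ)) (μ := μ)
  have hne : eLpNormEssSup (f : Ω → ℝ) μ ≠ ⊤ := by
    rw [← eLpNorm_exponent_top]; exact Lp.eLpNorm_ne_top f
  filter_upwards [h] with ω hω
  have := ENNReal.toReal_mono hne hω
  rw [Lp.norm_def, eLpNorm_exponent_top]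
  simpa [Real.norm_eq_abs] using this

/-- a monotone, cash-subadditive map `ρ : L∞ → L∞` is regular:
`1_A * ρ X = 1_A * ρ (1_A * X)` for every `m`-measurable set `A`. -/
theorem stmt_12 {Ω : Type*} {m mΩ : MeasurableSpace Ω} (hm : m ≤ mΩ)
    (μ : Measure Ω) [IsProbabilityMeasure μ]
    (ρ : Lp ℝ ⊤ μ → Lp ℝ ⊤ μ)
    (hmono : Monotone ρ)
    (hcs : ∀ X c : Lp ℝ ⊤ μ, 0 ≤ c → AEStronglyMeasurable[m] (c : Ω → ℝ) μ →
      ρ (X + c) ≤ ρ X + c) :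
    ∀ A : Set Ω, ∀ (hA : MeasurableSet[m] A), ∀ X : Lp ℝ ⊤ μ,
      LinfMul (indicatorConstLp ⊤ (hm A hA) (measure_ne_top μ A) (1 : ℝ)) (ρ X) =
        LinfMul (indicatorConstLp ⊤ (hm A hA) (measure_ne_top μ A) (1 : ℝ))
          (ρ (LinfMul (indicatorConstLp ⊤ (hm A hA) (measure_ne_top μ A) (1 : ℝ)) X)) := by
  intro A hA X
  set e : Lp ℝ ⊤ μ := indicatorConstLp ⊤ (hm A hA) (measure_ne_top μ A) (1 : ℝ) with he
  set c : Lp ℝ ⊤ μ :=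
    indicatorConstLp ⊤ (hm Aᶜ hA.compl) (measure_ne_top μ Aᶜ) (2 * ‖X‖) with hc
  have he_coe : (e : Ω → ℝ) =ᵐ[μ] A.indicator fun _ => (1 : ℝ) := indicatorConstLp_coeFn
  have hc_coe : (c : Ω → ℝ) =ᵐ[μ] Aᶜ.indicator fun _ => (2 * ‖X‖ : ℝ) := indicatorConstLp_coeFn
  have hXbd := ae_abs_le_norm X
  -- c ≥ 0
  have hc0 : (0 : Lp ℝ ⊤ μ) ≤ c := by
    rw [← Lp.coeFn_le]
    filter_upwards [hc_coe, Lp.coeFn_zero (E := ℝ) (p := ⊤) (μ := μ)] with ω h1 h2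
    rw [h1, h2]
    exact Set.indicator_nonneg (fun _ _ => by positivity) ω
  -- c is m-measurable
  have hcm : AEStronglyMeasurable[m] (c : Ω → ℝ) μ :=
    ⟨Aᶜ.indicator fun _ => (2 * ‖X‖ : ℝ),
      (stronglyMeasurable_const : StronglyMeasurable[m] fun _ => (2 * ‖X‖ : ℝ)).indicator hA.compl, hc_coe⟩
  -- key inequality 1 : X ≤ e*X + c
  have h1 : X ≤ LinfMul e X + c := by
    rw [← Lp.coeFn_le]
    filter_upwards [Lp.coeFn_add (LinfMul e X) c, LinfMul_coeFn e X, he_coe, hc_coe, hXbd]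
      with ω hadd hmul heω hcω hX
    rw [hadd, Pi.add_apply, hmul, heω, hcω]
    by_cases hω : ω ∈ A
    · simp [hω]
    · simp only [Set.indicator_of_notMem hω, Set.indicator_of_mem (Set.mem_compl hω),
        zero_mul, zero_add]
      nlinarith [abs_le.mp hX]
  -- key inequality 2 : e*X ≤ X + c
  have h2 : LinfMul e X ≤ X + c := by
    rw [← Lp.coeFn_le]
    filter_upwards [Lp.coeFn_add X c, LinfMul_coeFn e X, he_coe, hc_coe, hXbd]
      with ω hadd hmul heω hcω hX
    rw [hmul, hadd, Pi.add_apply, heω, hcω]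
    by_cases hω : ω ∈ A
    · simp [hω]
    · simp only [Set.indicator_of_notMem hω, Set.indicator_of_mem (Set.mem_compl hω),
        zero_mul]
      nlinarith [abs_le.mp hX]
  -- multiplication by e preserves ≤ and kills c
  have hmul_le : ∀ u v : Lp ℝ ⊤ μ, u ≤ v → LinfMul e u ≤ LinfMul e v := by
    intro u v huv
    rw [← Lp.coeFn_le] at huv ⊢
    filter_upwards [LinfMul_coeFn e u, LinfMul_coeFn e v, he_coe, huv] with ω h1 h2 h3 h4
    rw [h1, h2, h3]
    exact mul_le_mul_of_nonneg_left h4 (Set.indicator_nonneg (fun _ _ => zero_le_one) ω)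
  have hkill : ∀ v : Lp ℝ ⊤ μ, LinfMul e (v + c) = LinfMul e v := by
    intro v
    apply Lp.ext
    filter_upwards [LinfMul_coeFn e (v + c), LinfMul_coeFn e v, Lp.coeFn_add v c, he_coe, hc_coe]
      with ω h1 h2 h3 h4 h5
    rw [h1, h2, h3, Pi.add_apply, h4, h5]
    by_cases hω : ω ∈ A
    · simp [hω]
    · simp [hω]
  -- combine
  have hle1 : ρ X ≤ ρ (LinfMul e X) + c :=
    le_trans (hmono h1) (hcs (LinfMul e X) c hc0 hcm)
  have hle2 : ρ (LinfMul e X) ≤ ρ X + c :=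
    le_trans (hmono h2) (hcs X c hc0 hcm)
  refine le_antisymm ?_ ?_
  · calc LinfMul e (ρ X) ≤ LinfMul e (ρ (LinfMul e X) + c) := hmul_le _ _ hle1
      _ = LinfMul e (ρ (LinfMul e X)) := hkill _
  · calc LinfMul e (ρ (LinfMul e X)) ≤ LinfMul e (ρ X + c) := hmul_le _ _ hle2
      _ = LinfMul e (ρ X) := hkill _
end

section
/- Let f : ℝ → ℝ be convex on all of ℝ (ConvexOn ℝ Set.univ f). If f is neither nondecreasing nor nonincreasing (¬ Monotone f and ¬ Antitone f), then: (a) f is coercive, i.e. f tends to +∞ along the cocompact filter of ℝ (Tendsto f (cocompact ℝ) atTop); (b) f attains a global minimum, i.e. there exists x* ∈ ℝ with f x* ≤ f x for all x ∈ ℝ; and (c) the set M := {x ∈ ℝ | ∀ y, f x ≤ f y} of global minimizers is nonempty and compact. -/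
open Filter

/-- a convex function `f : ℝ → ℝ` that is neither nondecreasing nor
nonincreasing is coercive, attains a global minimum, and its set of global minimizers
is nonempty and compact. -/
theorem stmt_17 (f : ℝ → ℝ) (hconv : ConvexOn ℝ Set.univ f)
    (hnm : ¬ Monotone f) (hna : ¬ Antitone f) :
    Tendsto f (cocompact ℝ) atTop ∧
      (∃ xstar : ℝ, ∀ x : ℝ, f xstar ≤ f x) ∧
      ({x : ℝ | ∀ y : ℝ, f x ≤ f y}.Nonempty ∧ IsCompact {x : ℝ | ∀ y : ℝ, f x ≤ f y}) := by
  -- extract witnesses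
  simp only [Monotone, not_forall] at hnm
  simp only [Antitone, not_forall] at hna
  obtain ⟨a, b, hab, hfab⟩ := hnm
  obtain ⟨c, d, hcd, hfcd⟩ := hna
  push_neg at hfab hfcd
  have hab' : a < b := lt_of_le_of_ne hab (by rintro rfl; exact absurd le_rfl hfab.not_ge)
  have hcd' : c < d := lt_of_le_of_ne hcd (by rintro rfl; exact absurd le_rfl hfcd.not_ge)
  set s₁ : ℝ := (f b - f a) / (b - a) with hs₁
  set s₂ : ℝ := (f d - f c) / (d - c) with hs₂
  have hs₁neg : s₁ < 0 := div_neg_of_neg_of_pos (by linarith) (by linarith)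
  have hs₂pos : 0 < s₂ := div_pos (by linarith) (by linarith)
  -- lower bounds
  have hlow : ∀ x < a, f a + s₁ * (x - a) ≤ f x := by
    intro x hx
    have := hconv.slope_mono_adjacent (x := x) (y := a) (z := b)
      (Set.mem_univ _) (Set.mem_univ _) hx hab'
    have hax : (0:ℝ) < a - x := by linarith
    rw [div_le_div_iff₀ hax (by linarith : (0:ℝ) < b - a)] at this
    have hs : s₁ = (f b - f a) / (b - a) := rfl
    rw [hs, div_mul_eq_mul_div, add_comm, ← le_sub_iff_add_le,
      div_le_iff₀ (by linarith : (0:ℝ) < b - a)]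
    nlinarith
  have hhigh : ∀ x, d < x → f d + s₂ * (x - d) ≤ f x := by
    intro x hx
    have := hconv.slope_mono_adjacent (x := c) (y := d) (z := x)
      (Set.mem_univ _) (Set.mem_univ _) hcd' hx
    have hdx : (0:ℝ) < x - d := by linarith
    rw [div_le_div_iff₀ (by linarith : (0:ℝ) < d - c) hdx] at this
    have hs : s₂ = (f d - f c) / (d - c) := rfl
    rw [hs, div_mul_eq_mul_div, add_comm, ← le_sub_iff_add_le,
      div_le_iff₀ (by linarith : (0:ℝ) < d - c)]
    nlinarith
  -- coercivity
  have hcoer : Tendsto f (cocompact ℝ) atTop := by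
    rw [cocompact_eq_atBot_atTop]
    rw [tendsto_sup]
    constructor
    · apply tendsto_atTop_mono' _ (_ : ∀ᶠ x in atBot, f a + s₁ * (x - a) ≤ f x)
      · have h1 : Tendsto (fun x : ℝ => x - a) atBot atBot :=
          tendsto_atBot_add_const_right _ _ tendsto_id
        have h2 : Tendsto (fun x : ℝ => s₁ * (x - a)) atBot atTop := by
          exact Tendsto.const_mul_atBot_of_neg hs₁neg h1
        exact tendsto_atTop_add_const_left _ _ h2
      · filter_upwards [eventually_lt_atBot a] with x hx using hlow x hx
    · apply tendsto_atTop_mono' _ (_ : ∀ᶠ x in atTop, f d + s₂ * (x - d) ≤ f x)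
      · have h1 : Tendsto (fun x : ℝ => x - d) atTop atTop :=
          tendsto_atTop_add_const_right _ _ tendsto_id
        have h2 : Tendsto (fun x : ℝ => s₂ * (x - d)) atTop atTop :=
          h1.const_mul_atTop hs₂pos
        exact tendsto_atTop_add_const_left _ _ h2
      · filter_upwards [eventually_gt_atTop d] with x hx using hhigh x hx
  -- continuity
  have hcont : Continuous f := by
    have := hconv.continuousOn (by simp)
    exact continuousOn_univ.mp this
  obtain ⟨xstar, hxstar⟩ := hcont.exists_forall_le hcoer
  refine ⟨hcoer, ⟨xstar, hxstar⟩, ⟨xstar, hxstar⟩, ?_⟩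
  -- compactness of minimizer set
  have hclosed : IsClosed {x : ℝ | ∀ y : ℝ, f x ≤ f y} := by
    have : {x : ℝ | ∀ y : ℝ, f x ≤ f y} = ⋂ y, {x | f x ≤ f y} :=
      Set.ext fun x => by simp
    rw [this]
    exact isClosed_iInter fun y => isClosed_le hcont continuous_const
  obtain ⟨t, htc, hts⟩ := (hasBasis_cocompact.tendsto_left_iff.mp hcoer
    (Set.Ici (f xstar + 1)) (mem_atTop _))
  refine htc.of_isClosed_subset hclosed fun x hx => ?_
  by_contra hxt
  have h1 : f xstar + 1 ≤ f x := hts hxt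
  have := hx xstar
  linarith
end
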